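/- Let E be a normed vector space, T > 0, 0 < α < 1/2, K ≥ 0, C₁ ≥ 0, and a ∈ [0,T]. Let f : (0,T) → E satisfy: ‖f(t)‖ ≤ K for all t ∈ (0,T), t ↦ ‖f(t)‖ is measurable, and ∫₀ᵀ∫₀ᵀ ‖f(t) − f(s)‖²/|t−s|^{1+2α} dt ds ≤ C₁. Let θ := 𝟙_{[0,a)}. Then ∫₀ᵀ∫₀ᵀ ‖θ(t)f(t) − θ(s)f(s)‖²/|t−s|^{1+2α} dt ds ≤ 2C₁ + 2K² · (T² + (2α+1)/(1−2α)). -/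

import Mathlib

open MeasureTheory Set intervalIntegral
open scoped ENNReal

lemma amgm_step {T β : ℝ} (hT : 0 < T) (hβ1 : 0 < β) (hβ2 : β < 1) :
    2 * T ^ β ≤ β * T ^ 2 + (2 - β) := by
  have h := Real.geom_mean_le_arith_mean2_weighted (w₁ := β/2) (w₂ := 1 - β/2)
    (p₁ := T^2) (p₂ := 1) (by linarith) (by linarith) (by positivity) one_pos.le (by ring)
  have h2 : (T^2) ^ (β/2) = T ^ β := by
    rw [← Real.rpow_natCast T 2, ← Real.rpow_mul hT.le]
    ring_nf
  rw [Real.one_rpow, mul_one, h2] at h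
  nlinarith [h]

lemma real_key {T α : ℝ} (hT : 0 < T) (hα1 : 0 < α) (hα2 : α < 1 / 2) :
    T * (T - min T 1) + 2 * ((min T 1) ^ (1 - 2*α) / (1 - 2*α)) ≤
      T ^ 2 + (2*α + 1) / (1 - 2*α) := by
  have hβ1 : 0 < 1 - 2*α := by linarith
  rcases le_total T 1 with h | h
  · rw [min_eq_left h, sub_self, mul_zero, zero_add, mul_div_assoc']
    rw [div_le_iff₀ hβ1]
    have he : (T^2 + (2*α+1)/(1-2*α)) * (1-2*α) = (1-2*α)*T^2 + (2*α+1) := by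
      field_simp
    rw [he]
    have hg := amgm_step hT (β := 1 - 2*α) (by linarith) (by linarith)
    linarith
  · rw [min_eq_right h, Real.one_rpow, mul_one_div]
    have key : (2:ℝ) / (1 - 2*α) = (2*α+1)/(1-2*α) + 1 := by
      rw [div_add' _ _ _ hβ1.ne']
      ring_nf
    rw [key]
    nlinarith


-- inner integral computation for the J₁ piece
lemma inner_calc {α : ℝ} (hα1 : 0 < α) (hα2 : α < 1/2) {s a m : ℝ} (hsa : s < a)
    (ham : a < s + m) :
    ∫⁻ t in Set.Ico a (s + m), ENNReal.ofReal ((t - s) ^ (-(1 + 2*α)) : ℝ) =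
      ENNReal.ofReal (((a - s) ^ (-(2*α)) - m ^ (-(2*α))) / (2*α)) := by
  have h0 : (0:ℝ) < a - s := by linarith
  have hm : (0:ℝ) < m := by linarith
  have hle : a ≤ s + m := ham.le
  have hnot : (0:ℝ) ∉ Set.uIcc (a - s) m :=
    notMem_uIcc_of_lt h0 hm
  have hII : IntervalIntegrable (fun u : ℝ => u ^ (-(1 + 2*α))) volume (a - s) m :=
    intervalIntegrable_rpow (Or.inr hnot)
  have hII2 : IntervalIntegrable (fun t : ℝ => (t - s) ^ (-(1 + 2*α))) volume a (s + m) := by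
    have := hII.comp_sub_right s
    simpa [sub_add_cancel, add_comm] using this
  have hInt : IntegrableOn (fun t : ℝ => (t - s) ^ (-(1 + 2*α))) (Set.Ico a (s + m)) volume :=
    (intervalIntegrable_iff_integrableOn_Ico_of_le hle).1 hII2
  have hnn : 0 ≤ᵐ[volume.restrict (Set.Ico a (s + m))]
      fun t : ℝ => (t - s) ^ (-(1 + 2*α)) := by
    filter_upwards [ae_restrict_mem measurableSet_Ico] with t ht
    exact Real.rpow_nonneg (by linarith [ht.1]) _
  rw [← ofReal_integral_eq_lintegral_ofReal hInt hnn]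
  congr 1
  rw [integral_Ico_eq_integral_Ioo, ← integral_Ioc_eq_integral_Ioo,
    ← intervalIntegral.integral_of_le hle]
  rw [intervalIntegral.integral_comp_sub_right (fun u : ℝ => u ^ (-(1 + 2*α))) s]
  rw [show s + m - s = m by ring]
  rw [integral_rpow (Or.inr ⟨by intro hc; nlinarith [hc], hnot⟩)]
  rw [show -(1 + 2*α) + 1 = -(2*α) by ring]
  have h2α : (2*α) ≠ 0 := by positivity
  field_simp
  ring


lemma inner_calc' {α : ℝ} (hα1 : 0 < α) (hα2 : α < 1/2) {s a m : ℝ} (has : a < s)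
    (hsam : s < a + m) :
    ∫⁻ t in Set.Ioo (s - m) a, ENNReal.ofReal ((s - t) ^ (-(1 + 2*α)) : ℝ) =
      ENNReal.ofReal (((s - a) ^ (-(2*α)) - m ^ (-(2*α))) / (2*α)) := by
  have h0 : (0:ℝ) < s - a := by linarith
  have hm : (0:ℝ) < m := by linarith
  have hle : s - m ≤ a := by linarith
  have hnot : (0:ℝ) ∉ Set.uIcc (s - a) m := notMem_uIcc_of_lt h0 hm
  have hII : IntervalIntegrable (fun u : ℝ => u ^ (-(1 + 2*α))) volume (s - a) m :=
    intervalIntegrable_rpow (Or.inr hnot)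
  have hII2 : IntervalIntegrable (fun t : ℝ => (s - t) ^ (-(1 + 2*α))) volume (s - m) a := by
    have := (hII.comp_sub_left s).symm
    simpa using this
  have hInt : IntegrableOn (fun t : ℝ => (s - t) ^ (-(1 + 2*α))) (Set.Ioo (s - m) a) volume :=
    (intervalIntegrable_iff_integrableOn_Ioo_of_le hle).1 hII2
  have hnn : 0 ≤ᵐ[volume.restrict (Set.Ioo (s - m) a)]
      fun t : ℝ => (s - t) ^ (-(1 + 2*α)) := by
    filter_upwards [ae_restrict_mem measurableSet_Ioo] with t ht
    exact Real.rpow_nonneg (by linarith [ht.2]) _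
  rw [← ofReal_integral_eq_lintegral_ofReal hInt hnn]
  congr 1
  rw [← integral_Ioc_eq_integral_Ioo, ← intervalIntegral.integral_of_le hle]
  rw [intervalIntegral.integral_comp_sub_left (fun u : ℝ => u ^ (-(1 + 2*α))) s]
  rw [show s - (s - m) = m by ring]
  rw [integral_rpow (Or.inr ⟨by intro hc; nlinarith [hc], hnot⟩)]
  rw [show -(1 + 2*α) + 1 = -(2*α) by ring]
  have h2α : (2*α) ≠ 0 := by positivity
  field_simp
  ring


lemma real_outer {α m : ℝ} (hα1 : 0 < α) (hα2 : α < 1/2) (hm : 0 < m) :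
    ∫ u in (0:ℝ)..m, ((u ^ (-(2*α)) - m ^ (-(2*α))) / (2*α)) =
      m ^ (1 - 2*α) / (1 - 2*α) := by
  have hβ : (0:ℝ) < 1 - 2*α := by linarith
  have hr : (-1:ℝ) < -(2*α) := by linarith
  have hII : IntervalIntegrable (fun u : ℝ => u ^ (-(2*α))) volume 0 m :=
    intervalIntegrable_rpow' hr
  rw [intervalIntegral.integral_div]
  rw [intervalIntegral.integral_sub hII intervalIntegrable_const]
  rw [integral_rpow (Or.inl hr), intervalIntegral.integral_const]
  rw [show -(2*α) + 1 = 1 - 2*α by ring]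
  have hmm : m * m ^ (-(2*α)) = m ^ (1 - 2*α) := by
    rw [show (1:ℝ) - 2*α = 1 + -(2*α) by ring, Real.rpow_add hm, Real.rpow_one]
  rw [Real.zero_rpow (by positivity : (1:ℝ) - 2*α ≠ 0)]
  rw [sub_zero, smul_eq_mul, sub_zero, hmm]
  have h2α : (2*α) ≠ 0 := by positivity
  field_simp
  ring



lemma outer_calc {α : ℝ} (hα1 : 0 < α) (hα2 : α < 1/2) {m : ℝ} (hm : 0 < m) (a : ℝ) :
    ∫⁻ s in Set.Ioo (a - m) a,
        ENNReal.ofReal (((a - s) ^ (-(2*α)) - m ^ (-(2*α))) / (2*α)) =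
      ENNReal.ofReal (m ^ (1 - 2*α) / (1 - 2*α)) := by
  have hr : (-1:ℝ) < -(2*α) := by linarith
  have hle : a - m ≤ a := by linarith
  have hII0 : IntervalIntegrable (fun u : ℝ => u ^ (-(2*α))) volume 0 m :=
    intervalIntegrable_rpow' hr
  have hII : IntervalIntegrable (fun s : ℝ => ((a - s) ^ (-(2*α)) - m ^ (-(2*α))) / (2*α))
      volume (a - m) a := by
    have h1 : IntervalIntegrable (fun s : ℝ => (a - s) ^ (-(2*α))) volume (a - m) a := by
      have := hII0.comp_sub_left a
      simpa using this.symm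
    exact (h1.sub intervalIntegrable_const).div_const _
  have hInt : IntegrableOn (fun s : ℝ => ((a - s) ^ (-(2*α)) - m ^ (-(2*α))) / (2*α))
      (Set.Ioo (a - m) a) volume :=
    (intervalIntegrable_iff_integrableOn_Ioo_of_le hle).1 hII
  have hnn : 0 ≤ᵐ[volume.restrict (Set.Ioo (a - m) a)]
      fun s : ℝ => ((a - s) ^ (-(2*α)) - m ^ (-(2*α))) / (2*α) := by
    filter_upwards [ae_restrict_mem measurableSet_Ioo] with s hs
    have h1 : (0:ℝ) < a - s := by linarith [hs.2]
    have h2 : a - s ≤ m := by linarith [hs.1]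
    have := Real.rpow_le_rpow_of_nonpos h1 h2 (by linarith : -(2*α) ≤ 0)
    exact div_nonneg (by linarith) (by positivity)
  rw [← ofReal_integral_eq_lintegral_ofReal hInt hnn]
  congr 1
  rw [← integral_Ioc_eq_integral_Ioo, ← intervalIntegral.integral_of_le hle]
  rw [intervalIntegral.integral_comp_sub_left
    (fun u : ℝ => (u ^ (-(2*α)) - m ^ (-(2*α))) / (2*α)) a]
  rw [show a - a = 0 by ring, show a - (a - m) = m by ring]
  exact real_outer hα1 hα2 hm

lemma outer_calc' {α : ℝ} (hα1 : 0 < α) (hα2 : α < 1/2) {m : ℝ} (hm : 0 < m) (a : ℝ) :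
    ∫⁻ s in Set.Ioo a (a + m),
        ENNReal.ofReal (((s - a) ^ (-(2*α)) - m ^ (-(2*α))) / (2*α)) =
      ENNReal.ofReal (m ^ (1 - 2*α) / (1 - 2*α)) := by
  have hr : (-1:ℝ) < -(2*α) := by linarith
  have hle : a ≤ a + m := by linarith
  have hII0 : IntervalIntegrable (fun u : ℝ => u ^ (-(2*α))) volume 0 m :=
    intervalIntegrable_rpow' hr
  have hII : IntervalIntegrable (fun s : ℝ => ((s - a) ^ (-(2*α)) - m ^ (-(2*α))) / (2*α))
      volume a (a + m) := by
    have h1 : IntervalIntegrable (fun s : ℝ => (s - a) ^ (-(2*α))) volume a (a + m) := by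
      have := hII0.comp_sub_right a
      simpa [add_comm] using this
    exact (h1.sub intervalIntegrable_const).div_const _
  have hInt : IntegrableOn (fun s : ℝ => ((s - a) ^ (-(2*α)) - m ^ (-(2*α))) / (2*α))
      (Set.Ioo a (a + m)) volume :=
    (intervalIntegrable_iff_integrableOn_Ioo_of_le hle).1 hII
  have hnn : 0 ≤ᵐ[volume.restrict (Set.Ioo a (a + m))]
      fun s : ℝ => ((s - a) ^ (-(2*α)) - m ^ (-(2*α))) / (2*α) := by
    filter_upwards [ae_restrict_mem measurableSet_Ioo] with s hs
    have h1 : (0:ℝ) < s - a := by linarith [hs.1]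
    have h2 : s - a ≤ m := by linarith [hs.2]
    have := Real.rpow_le_rpow_of_nonpos h1 h2 (by linarith : -(2*α) ≤ 0)
    exact div_nonneg (by linarith) (by positivity)
  rw [← ofReal_integral_eq_lintegral_ofReal hInt hnn]
  congr 1
  rw [← integral_Ioc_eq_integral_Ioo, ← intervalIntegral.integral_of_le hle]
  rw [intervalIntegral.integral_comp_sub_right
    (fun u : ℝ => (u ^ (-(2*α)) - m ^ (-(2*α))) / (2*α)) a]
  rw [show a - a = 0 by ring, show a + m - a = m by ring]
  exact real_outer hα1 hα2 hm


lemma J1_bound {α : ℝ} (hα1 : 0 < α) (hα2 : α < 1/2) (T a m : ℝ) (hm : 0 < m) :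
    ∫⁻ s in Set.Ioo (0:ℝ) T, ∫⁻ t in Set.Ioo (0:ℝ) T,
        ({q : ℝ × ℝ | q.2 < a ∧ a ≤ q.1 ∧ q.1 < q.2 + m}).indicator
          (fun q => ENNReal.ofReal ((q.1 - q.2) ^ (-(1 + 2*α)) : ℝ)) (t, s) ≤
      ENNReal.ofReal (m ^ (1 - 2*α) / (1 - 2*α)) := by
  have hstep : ∀ s : ℝ,
      (∫⁻ t in Set.Ioo (0:ℝ) T,
        ({q : ℝ × ℝ | q.2 < a ∧ a ≤ q.1 ∧ q.1 < q.2 + m}).indicator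
          (fun q => ENNReal.ofReal ((q.1 - q.2) ^ (-(1 + 2*α)) : ℝ)) (t, s)) ≤
      (Set.Ioo (a - m) a).indicator
        (fun s => ENNReal.ofReal (((a - s) ^ (-(2*α)) - m ^ (-(2*α))) / (2*α))) s := by
    intro s
    by_cases hs : s ∈ Set.Ioo (a - m) a
    · have h1 : (fun t : ℝ =>
          ({q : ℝ × ℝ | q.2 < a ∧ a ≤ q.1 ∧ q.1 < q.2 + m}).indicator
            (fun q => ENNReal.ofReal ((q.1 - q.2) ^ (-(1 + 2*α)) : ℝ)) (t, s)) =
          (Set.Ico a (s + m)).indicator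
            (fun t => ENNReal.ofReal ((t - s) ^ (-(1 + 2*α)) : ℝ)) := by
        funext t
        rw [Set.indicator_apply, Set.indicator_apply]
        by_cases h : t ∈ Set.Ico a (s + m)
        · rw [if_pos h, if_pos]
          exact ⟨hs.2, h.1, h.2⟩
        · rw [if_neg h, if_neg]
          intro hc
          exact h ⟨hc.2.1, hc.2.2⟩
      rw [h1, Set.indicator_of_mem hs]
      calc ∫⁻ t in Set.Ioo (0:ℝ) T, (Set.Ico a (s + m)).indicator
            (fun t => ENNReal.ofReal ((t - s) ^ (-(1 + 2*α)) : ℝ)) t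
          ≤ ∫⁻ t, (Set.Ico a (s + m)).indicator
            (fun t => ENNReal.ofReal ((t - s) ^ (-(1 + 2*α)) : ℝ)) t :=
            setLIntegral_le_lintegral _ _
        _ = ∫⁻ t in Set.Ico a (s + m), ENNReal.ofReal ((t - s) ^ (-(1 + 2*α)) : ℝ) :=
            lintegral_indicator measurableSet_Ico _
        _ = ENNReal.ofReal (((a - s) ^ (-(2*α)) - m ^ (-(2*α))) / (2*α)) :=
            inner_calc hα1 hα2 hs.2 (by linarith [hs.1])
    · rw [Set.indicator_of_notMem hs]
      have h0 : (fun t : ℝ =>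
          ({q : ℝ × ℝ | q.2 < a ∧ a ≤ q.1 ∧ q.1 < q.2 + m}).indicator
            (fun q => ENNReal.ofReal ((q.1 - q.2) ^ (-(1 + 2*α)) : ℝ)) (t, s)) = fun _ => 0 := by
        funext t
        rw [Set.indicator_apply, if_neg]
        intro hc
        rcases hc with ⟨h1, h2, h3⟩
        simp only [Set.mem_Ioo, not_and, not_lt] at hs
        rcases lt_or_ge (a - m) s with h4 | h4
        · exact absurd h1 (not_lt.2 (hs h4))
        · linarith
      rw [h0]
      simp
  calc ∫⁻ s in Set.Ioo (0:ℝ) T, ∫⁻ t in Set.Ioo (0:ℝ) T,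
        ({q : ℝ × ℝ | q.2 < a ∧ a ≤ q.1 ∧ q.1 < q.2 + m}).indicator
          (fun q => ENNReal.ofReal ((q.1 - q.2) ^ (-(1 + 2*α)) : ℝ)) (t, s)
      ≤ ∫⁻ s in Set.Ioo (0:ℝ) T, (Set.Ioo (a - m) a).indicator
          (fun s => ENNReal.ofReal (((a - s) ^ (-(2*α)) - m ^ (-(2*α))) / (2*α))) s :=
        lintegral_mono hstep
    _ ≤ ∫⁻ s, (Set.Ioo (a - m) a).indicator
          (fun s => ENNReal.ofReal (((a - s) ^ (-(2*α)) - m ^ (-(2*α))) / (2*α))) s :=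
        setLIntegral_le_lintegral _ _
    _ = ∫⁻ s in Set.Ioo (a - m) a,
          ENNReal.ofReal (((a - s) ^ (-(2*α)) - m ^ (-(2*α))) / (2*α)) :=
        lintegral_indicator measurableSet_Ioo _
    _ = ENNReal.ofReal (m ^ (1 - 2*α) / (1 - 2*α)) := outer_calc hα1 hα2 hm a


lemma J2_bound {α : ℝ} (hα1 : 0 < α) (hα2 : α < 1/2) (T a m : ℝ) (hm : 0 < m) :
    ∫⁻ s in Set.Ioo (0:ℝ) T, ∫⁻ t in Set.Ioo (0:ℝ) T,
        ({q : ℝ × ℝ | q.1 < a ∧ a < q.2 ∧ q.2 < q.1 + m}).indicator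
          (fun q => ENNReal.ofReal ((q.2 - q.1) ^ (-(1 + 2*α)) : ℝ)) (t, s) ≤
      ENNReal.ofReal (m ^ (1 - 2*α) / (1 - 2*α)) := by
  have hstep : ∀ s : ℝ,
      (∫⁻ t in Set.Ioo (0:ℝ) T,
        ({q : ℝ × ℝ | q.1 < a ∧ a < q.2 ∧ q.2 < q.1 + m}).indicator
          (fun q => ENNReal.ofReal ((q.2 - q.1) ^ (-(1 + 2*α)) : ℝ)) (t, s)) ≤
      (Set.Ioo a (a + m)).indicator
        (fun s => ENNReal.ofReal (((s - a) ^ (-(2*α)) - m ^ (-(2*α))) / (2*α))) s := by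
    intro s
    by_cases hs : s ∈ Set.Ioo a (a + m)
    · have h1 : (fun t : ℝ =>
          ({q : ℝ × ℝ | q.1 < a ∧ a < q.2 ∧ q.2 < q.1 + m}).indicator
            (fun q => ENNReal.ofReal ((q.2 - q.1) ^ (-(1 + 2*α)) : ℝ)) (t, s)) =
          (Set.Ioo (s - m) a).indicator
            (fun t => ENNReal.ofReal ((s - t) ^ (-(1 + 2*α)) : ℝ)) := by
        funext t
        rw [Set.indicator_apply, Set.indicator_apply]
        by_cases h : t ∈ Set.Ioo (s - m) a
        · rw [if_pos h, if_pos]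
          exact ⟨h.2, hs.1, by linarith [h.1]⟩
        · rw [if_neg h, if_neg]
          intro hc
          exact h ⟨by linarith [hc.2.2], hc.1⟩
      rw [h1, Set.indicator_of_mem hs]
      calc ∫⁻ t in Set.Ioo (0:ℝ) T, (Set.Ioo (s - m) a).indicator
            (fun t => ENNReal.ofReal ((s - t) ^ (-(1 + 2*α)) : ℝ)) t
          ≤ ∫⁻ t, (Set.Ioo (s - m) a).indicator
            (fun t => ENNReal.ofReal ((s - t) ^ (-(1 + 2*α)) : ℝ)) t :=
            setLIntegral_le_lintegral _ _
        _ = ∫⁻ t in Set.Ioo (s - m) a, ENNReal.ofReal ((s - t) ^ (-(1 + 2*α)) : ℝ) :=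
            lintegral_indicator measurableSet_Ioo _
        _ = ENNReal.ofReal (((s - a) ^ (-(2*α)) - m ^ (-(2*α))) / (2*α)) :=
            inner_calc' hα1 hα2 hs.1 hs.2
    · rw [Set.indicator_of_notMem hs]
      have h0 : (fun t : ℝ =>
          ({q : ℝ × ℝ | q.1 < a ∧ a < q.2 ∧ q.2 < q.1 + m}).indicator
            (fun q => ENNReal.ofReal ((q.2 - q.1) ^ (-(1 + 2*α)) : ℝ)) (t, s)) = fun _ => 0 := by
        funext t
        rw [Set.indicator_apply, if_neg]
        intro hc
        rcases hc with ⟨h1, h2, h3⟩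
        simp only [Set.mem_Ioo, not_and, not_lt] at hs
        exact absurd (hs h2) (by linarith)
      rw [h0]
      simp
  calc ∫⁻ s in Set.Ioo (0:ℝ) T, ∫⁻ t in Set.Ioo (0:ℝ) T,
        ({q : ℝ × ℝ | q.1 < a ∧ a < q.2 ∧ q.2 < q.1 + m}).indicator
          (fun q => ENNReal.ofReal ((q.2 - q.1) ^ (-(1 + 2*α)) : ℝ)) (t, s)
      ≤ ∫⁻ s in Set.Ioo (0:ℝ) T, (Set.Ioo a (a + m)).indicator
          (fun s => ENNReal.ofReal (((s - a) ^ (-(2*α)) - m ^ (-(2*α))) / (2*α))) s :=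
        lintegral_mono hstep
    _ ≤ ∫⁻ s, (Set.Ioo a (a + m)).indicator
          (fun s => ENNReal.ofReal (((s - a) ^ (-(2*α)) - m ^ (-(2*α))) / (2*α))) s :=
        setLIntegral_le_lintegral _ _
    _ = ∫⁻ s in Set.Ioo a (a + m),
          ENNReal.ofReal (((s - a) ^ (-(2*α)) - m ^ (-(2*α))) / (2*α)) :=
        lintegral_indicator measurableSet_Ioo _
    _ = ENNReal.ofReal (m ^ (1 - 2*α) / (1 - 2*α)) := outer_calc' hα1 hα2 hm a

lemma far_bound (T m : ℝ) (hm0 : 0 < m) (hmT : m ≤ T) :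
    ∫⁻ s in Set.Ioo (0:ℝ) T, ∫⁻ t in Set.Ioo (0:ℝ) T,
        ({q : ℝ × ℝ | m ≤ abs (q.1 - q.2)}).indicator (fun _ => (1:ℝ≥0∞)) (t, s) ≤
      ENNReal.ofReal (T * (T - m)) := by
  have hstep : ∀ s ∈ Set.Ioo (0:ℝ) T,
      (∫⁻ t in Set.Ioo (0:ℝ) T,
        ({q : ℝ × ℝ | m ≤ abs (q.1 - q.2)}).indicator (fun _ => (1:ℝ≥0∞)) (t, s)) ≤
      ENNReal.ofReal (T - m) := by
    intro s hs
    have hsec : MeasurableSet {t : ℝ | m ≤ abs (t - s)} :=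
      measurableSet_le measurable_const (measurable_id.sub measurable_const).abs
    have h1 : (fun t : ℝ =>
        ({q : ℝ × ℝ | m ≤ abs (q.1 - q.2)}).indicator (fun _ => (1:ℝ≥0∞)) (t, s)) =
        fun t => ({t : ℝ | m ≤ abs (t - s)}).indicator (fun _ => (1:ℝ≥0∞)) t := by
      funext t
      rfl
    rw [h1]
    calc ∫⁻ t in Set.Ioo (0:ℝ) T, ({t : ℝ | m ≤ abs (t - s)}).indicator (fun _ => (1:ℝ≥0∞)) t
        = ∫⁻ t in {t : ℝ | m ≤ abs (t - s)}, (1:ℝ≥0∞) ∂(volume.restrict (Set.Ioo (0:ℝ) T)) := by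
          rw [lintegral_indicator hsec]
      _ = (volume.restrict (Set.Ioo (0:ℝ) T)) {t : ℝ | m ≤ abs (t - s)} := setLIntegral_one _
      _ = volume ({t : ℝ | m ≤ abs (t - s)} ∩ Set.Ioo (0:ℝ) T) := Measure.restrict_apply hsec
      _ ≤ volume (Set.Ioc (0:ℝ) (s - m) ∪ Set.Ico (s + m) T) := by
          apply measure_mono
          rintro t ⟨htm, ht0, htT⟩
          simp only [Set.mem_setOf_eq] at htm
          rcases le_or_gt t s with hts | hts
          · left
            constructor
            · exact ht0
            · have : m ≤ s - t := by
                rw [abs_sub_comm, abs_of_nonneg (by linarith)] at htm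
                linarith
              linarith
          · right
            constructor
            · have : m ≤ t - s := by
                rw [abs_of_pos (by linarith)] at htm
                linarith
              linarith
            · exact htT
      _ ≤ volume (Set.Ioc (0:ℝ) (s - m)) + volume (Set.Ico (s + m) T) := measure_union_le _ _
      _ = ENNReal.ofReal (s - m - 0) + ENNReal.ofReal (T - (s + m)) := by
          rw [Real.volume_Ioc, Real.volume_Ico]
      _ ≤ ENNReal.ofReal (T - m) := by
          rcases le_or_gt (s - m) 0 with h | h
          · rw [sub_zero, ENNReal.ofReal_eq_zero.2 (by linarith), zero_add]
            exact ENNReal.ofReal_le_ofReal (by linarith [hs.1])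
          · rcases le_or_gt (T - (s + m)) 0 with h2 | h2
            · rw [ENNReal.ofReal_eq_zero.2 h2, add_zero, sub_zero]
              exact ENNReal.ofReal_le_ofReal (by linarith [hs.2])
            · rw [sub_zero, ← ENNReal.ofReal_add (by linarith) (by linarith)]
              exact ENNReal.ofReal_le_ofReal (by linarith [hm0])
  calc ∫⁻ s in Set.Ioo (0:ℝ) T, ∫⁻ t in Set.Ioo (0:ℝ) T,
        ({q : ℝ × ℝ | m ≤ abs (q.1 - q.2)}).indicator (fun _ => (1:ℝ≥0∞)) (t, s)
      ≤ ∫⁻ t in Set.Ioo (0:ℝ) T, ENNReal.ofReal (T - m) := by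
        apply lintegral_mono_ae
        filter_upwards [ae_restrict_mem measurableSet_Ioo] with s hs
        exact hstep s hs
    _ = ENNReal.ofReal (T - m) * volume (Set.Ioo (0:ℝ) T) := setLIntegral_const _ _
    _ = ENNReal.ofReal (T - m) * ENNReal.ofReal (T - 0) := by rw [Real.volume_Ioo]
    _ ≤ ENNReal.ofReal (T * (T - m)) := by
        rw [sub_zero, ← ENNReal.ofReal_mul (by linarith)]
        exact ENNReal.ofReal_le_ofReal (by nlinarith)

lemma F5_bound (T a : ℝ) :
    ∫⁻ s in Set.Ioo (0:ℝ) T, ∫⁻ t in Set.Ioo (0:ℝ) T,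
        ({a} : Set ℝ).indicator (fun _ => (⊤:ℝ≥0∞)) s ≤ 0 := by
  have h1 : ∀ s : ℝ, (∫⁻ t in Set.Ioo (0:ℝ) T,
      ({a} : Set ℝ).indicator (fun _ => (⊤:ℝ≥0∞)) s) =
      ({a} : Set ℝ).indicator (fun _ => (⊤:ℝ≥0∞)) s * volume (Set.Ioo (0:ℝ) T) := fun s =>
    setLIntegral_const _ _
  simp_rw [h1]
  have h2 : (fun s : ℝ => ({a} : Set ℝ).indicator (fun _ => (⊤:ℝ≥0∞)) s *
      volume (Set.Ioo (0:ℝ) T)) =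
      fun s => ({a} : Set ℝ).indicator (fun _ => (⊤:ℝ≥0∞) * volume (Set.Ioo (0:ℝ) T)) s := by
    funext s
    by_cases h : s = a
    · subst h; simp
    · simp [Set.indicator_of_notMem (by simpa using h : s ∉ ({a} : Set ℝ))]
  rw [h2, lintegral_indicator (measurableSet_singleton a), setLIntegral_const,
    Measure.restrict_apply (measurableSet_singleton a)]
  have h3 : volume (({a} : Set ℝ) ∩ Set.Ioo 0 T) = 0 :=
    measure_mono_null Set.inter_subset_left (Real.volume_singleton)
  rw [h3, mul_zero]


lemma pointwise_bound {E : Type*} [NormedAddCommGroup E] {T α K a m : ℝ}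
    (hα1 : 0 < α) (hα2 : α < 1/2) (hK : 0 ≤ K) (hm : m = min T 1)
    {f : ℝ → E} (hfb : ∀ t ∈ Set.Ioo (0:ℝ) T, ‖f t‖ ≤ K)
    {t s : ℝ} (ht : t ∈ Set.Ioo (0:ℝ) T) (hs : s ∈ Set.Ioo (0:ℝ) T) :
    ENNReal.ofReal (‖(Set.Ico (0:ℝ) a).indicator f t -
        (Set.Ico (0:ℝ) a).indicator f s‖^2 / |t - s| ^ (1 + 2*α)) ≤
      ENNReal.ofReal (2 * (‖f t - f s‖^2 / |t - s| ^ (1 + 2*α)))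
        + ENNReal.ofReal (2*K^2) *
          (({q : ℝ × ℝ | m ≤ abs (q.1 - q.2)}).indicator (fun _ => (1:ℝ≥0∞)) (t, s)
            + ({q : ℝ × ℝ | q.2 < a ∧ a ≤ q.1 ∧ q.1 < q.2 + m}).indicator
                (fun q => ENNReal.ofReal ((q.1 - q.2) ^ (-(1 + 2*α)) : ℝ)) (t, s)
            + ({q : ℝ × ℝ | q.1 < a ∧ a < q.2 ∧ q.2 < q.1 + m}).indicator
                (fun q => ENNReal.ofReal ((q.2 - q.1) ^ (-(1 + 2*α)) : ℝ)) (t, s)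
            + ({a} : Set ℝ).indicator (fun _ => (⊤:ℝ≥0∞)) s) := by
  have hp0 : (0:ℝ) ≤ 1 + 2*α := by linarith
  have habsT : |t - s| < T := abs_lt.2 ⟨by linarith [ht.1, hs.2], by linarith [ht.2, hs.1]⟩
  have hK2 : (0:ℝ) ≤ K^2 := sq_nonneg K
  -- helper for the far case
  have far_helper : ∀ (x : E), ‖x‖ ≤ K → m ≤ |t - s| →
      ‖x‖^2 / |t - s| ^ (1 + 2*α) ≤ 2*K^2 := by
    intro x hx hfar
    have h1le : (1:ℝ) ≤ |t - s| := by
      rcases le_total T 1 with hT1 | hT1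
      · exfalso
        rw [min_eq_left hT1] at hm
        linarith [hm ▸ hfar]
      · rw [min_eq_right hT1] at hm
        linarith [hm ▸ hfar]
    have hD1 : (1:ℝ) ≤ |t - s| ^ (1 + 2*α) := Real.one_le_rpow h1le hp0
    have hx2 : ‖x‖^2 ≤ K^2 := pow_le_pow_left₀ (norm_nonneg _) hx 2
    have hDpos : (0:ℝ) < |t - s| ^ (1 + 2*α) := by linarith
    calc ‖x‖^2 / |t - s| ^ (1 + 2*α) ≤ K^2 / |t - s| ^ (1 + 2*α) := by
          rw [div_eq_mul_inv, div_eq_mul_inv]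
          exact mul_le_mul_of_nonneg_right hx2 (by positivity)
      _ ≤ K^2 := div_le_self hK2 hD1
      _ ≤ 2*K^2 := by linarith
  by_cases hta : t < a
  · by_cases hsa : s < a
    · -- both inside
      rw [Set.indicator_of_mem (Set.mem_Ico.mpr ⟨ht.1.le, hta⟩) f, Set.indicator_of_mem (Set.mem_Ico.mpr ⟨hs.1.le, hsa⟩) f]
      refine le_trans (ENNReal.ofReal_le_ofReal ?_) (self_le_add_right _ _)
      have hnn : (0:ℝ) ≤ ‖f t - f s‖^2 / |t - s| ^ (1 + 2*α) :=
        div_nonneg (by positivity) (Real.rpow_nonneg (abs_nonneg _) _)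
      linarith
    · -- t inside, s outside : t < a ≤ s
      have hsa' : a ≤ s := not_lt.1 hsa
      rw [Set.indicator_of_mem (Set.mem_Ico.mpr ⟨ht.1.le, hta⟩) f,
        Set.indicator_of_notMem (fun h => hsa h.2) f, sub_zero]
      have hts : t < s := lt_of_lt_of_le hta hsa'
      have habs2 : |t - s| = s - t := by
        rw [abs_sub_comm]
        exact abs_of_pos (by linarith)
      have hft : ‖f t‖ ≤ K := hfb t ht
      by_cases hfar : m ≤ |t - s|
      · refine le_trans (ENNReal.ofReal_le_ofReal (far_helper _ hft hfar))
          (le_trans ?_ (self_le_add_left _ _))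
        refine le_trans ?_
          (mul_le_mul_right (le_add_right (le_add_right (self_le_add_right _ _))) _)
        rw [Set.indicator_of_mem
          (show (t, s) ∈ {q : ℝ × ℝ | m ≤ abs (q.1 - q.2)} from hfar), mul_one]
      · push_neg at hfar
        by_cases hsa2 : a < s
        · -- E4 case
          have hmem : (t, s) ∈ {q : ℝ × ℝ | q.1 < a ∧ a < q.2 ∧ q.2 < q.1 + m} :=
            ⟨hta, hsa2, by rw [habs2] at hfar; linarith⟩
          have hreal : ‖f t‖^2 / |t - s| ^ (1 + 2*α) ≤ 2*K^2 * (s - t) ^ (-(1 + 2*α)) := by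
            rw [habs2, Real.rpow_neg (by linarith : (0:ℝ) ≤ s - t), ← div_eq_mul_inv]
            rw [div_eq_mul_inv, div_eq_mul_inv]
            refine mul_le_mul_of_nonneg_right ?_
              (inv_nonneg.2 (Real.rpow_nonneg (by linarith) _))
            have := pow_le_pow_left₀ (norm_nonneg (f t)) hft 2
            linarith
          refine le_trans (ENNReal.ofReal_le_ofReal hreal) (le_trans ?_ (self_le_add_left _ _))
          rw [ENNReal.ofReal_mul (by positivity)]
          refine mul_le_mul_right ?_ _
          rw [Set.indicator_of_mem hmem]
          exact le_add_right (self_le_add_left _ _)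
        · -- s = a case
          have hsa3 : s = a := le_antisymm (not_lt.1 hsa2) hsa'
          by_cases hK0 : K = 0
          · have hft0 : ‖f t‖ = 0 := le_antisymm (by simpa [hK0] using hft) (norm_nonneg _)
            rw [hft0]
            simp
          · have hc0 : ENNReal.ofReal (2*K^2) ≠ 0 := by
              rw [Ne, ENNReal.ofReal_eq_zero, not_le]
              have : 0 < K^2 := by positivity
              linarith
            have h5 : ({a} : Set ℝ).indicator (fun _ => (⊤:ℝ≥0∞)) s = ⊤ :=
              Set.indicator_of_mem (by simp [hsa3]) _
            rw [h5, add_top, ENNReal.mul_top hc0, add_top]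
            exact le_top
  · by_cases hsa : s < a
    · -- s inside, t outside : s < a ≤ t
      have hta' : a ≤ t := not_lt.1 hta
      rw [Set.indicator_of_notMem (fun h => hta h.2) f,
        Set.indicator_of_mem (Set.mem_Ico.mpr ⟨hs.1.le, hsa⟩) f, zero_sub, norm_neg]
      have hst : s < t := lt_of_lt_of_le hsa hta'
      have habs2 : |t - s| = t - s := abs_of_pos (by linarith)
      have hfs : ‖f s‖ ≤ K := hfb s hs
      by_cases hfar : m ≤ |t - s|
      · refine le_trans (ENNReal.ofReal_le_ofReal (far_helper _ hfs hfar))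
          (le_trans ?_ (self_le_add_left _ _))
        refine le_trans ?_
          (mul_le_mul_right (le_add_right (le_add_right (self_le_add_right _ _))) _)
        rw [Set.indicator_of_mem
          (show (t, s) ∈ {q : ℝ × ℝ | m ≤ abs (q.1 - q.2)} from hfar), mul_one]
      · push_neg at hfar
        have hmem : (t, s) ∈ {q : ℝ × ℝ | q.2 < a ∧ a ≤ q.1 ∧ q.1 < q.2 + m} :=
          ⟨hsa, hta', by rw [habs2] at hfar; linarith⟩
        have hreal : ‖f s‖^2 / |t - s| ^ (1 + 2*α) ≤ 2*K^2 * (t - s) ^ (-(1 + 2*α)) := by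
          rw [habs2, Real.rpow_neg (by linarith : (0:ℝ) ≤ t - s), ← div_eq_mul_inv]
          rw [div_eq_mul_inv, div_eq_mul_inv]
          refine mul_le_mul_of_nonneg_right ?_
            (inv_nonneg.2 (Real.rpow_nonneg (by linarith) _))
          have := pow_le_pow_left₀ (norm_nonneg (f s)) hfs 2
          linarith
        refine le_trans (ENNReal.ofReal_le_ofReal hreal) (le_trans ?_ (self_le_add_left _ _))
        rw [ENNReal.ofReal_mul (by positivity)]
        refine mul_le_mul_right ?_ _
        rw [Set.indicator_of_mem hmem]
        exact le_add_right (le_add_right (self_le_add_left _ _))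
    · -- both outside
      rw [Set.indicator_of_notMem (fun h => hta h.2) f,
        Set.indicator_of_notMem (fun h => hsa h.2) f]
      simp



open MeasureTheory

/-- Gagliardo seminorm bound for the truncated function
`θ f`, `θ = 𝟙_{[0,a)}`: if `‖f‖ ≤ K` on `(0,T)` and the Gagliardo double
integral of `f` is at most `C₁`, then that of `θ f` is at most
`2C₁ + 2K² (T² + (2α+1)/(1-2α))`. -/
theorem stmt18 {E : Type*} [NormedAddCommGroup E]
    (T α K C₁ a : ℝ) (hT : 0 < T) (hα1 : 0 < α) (hα2 : α < 1 / 2)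
    (hK : 0 ≤ K) (hC₁ : 0 ≤ C₁) (ha : a ∈ Set.Icc 0 T)
    (f : ℝ → E)
    (hfb : ∀ t ∈ Set.Ioo (0 : ℝ) T, ‖f t‖ ≤ K)
    (hfm : Measurable fun t => ‖f t‖)
    (hgag : ∫⁻ s in Set.Ioo (0 : ℝ) T, ∫⁻ t in Set.Ioo (0 : ℝ) T,
        ENNReal.ofReal (‖f t - f s‖ ^ 2 / |t - s| ^ (1 + 2 * α)) ≤
      ENNReal.ofReal C₁) :
    ∫⁻ s in Set.Ioo (0 : ℝ) T, ∫⁻ t in Set.Ioo (0 : ℝ) T,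
        ENNReal.ofReal
          (‖(Set.Ico (0 : ℝ) a).indicator f t -
              (Set.Ico (0 : ℝ) a).indicator f s‖ ^ 2 /
            |t - s| ^ (1 + 2 * α)) ≤
      ENNReal.ofReal (2 * C₁ + 2 * K ^ 2 * (T ^ 2 + (2 * α + 1) / (1 - 2 * α))) := by
  set m : ℝ := min T 1 with hmdef
  have hm0 : 0 < m := lt_min hT one_pos
  have hmT : m ≤ T := min_le_left _ _
  have hβ : (0:ℝ) < 1 - 2*α := by linarith
  -- the four comparison functions
  set A : ℝ × ℝ → ℝ≥0∞ :=
    ({q : ℝ × ℝ | m ≤ abs (q.1 - q.2)}).indicator (fun _ => (1:ℝ≥0∞)) with hAdef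
  set B : ℝ × ℝ → ℝ≥0∞ :=
    ({q : ℝ × ℝ | q.2 < a ∧ a ≤ q.1 ∧ q.1 < q.2 + m}).indicator
      (fun q => ENNReal.ofReal ((q.1 - q.2) ^ (-(1 + 2*α)) : ℝ)) with hBdef
  set C : ℝ × ℝ → ℝ≥0∞ :=
    ({q : ℝ × ℝ | q.1 < a ∧ a < q.2 ∧ q.2 < q.1 + m}).indicator
      (fun q => ENNReal.ofReal ((q.2 - q.1) ^ (-(1 + 2*α)) : ℝ)) with hCdef
  set Dd : ℝ → ℝ≥0∞ := ({a} : Set ℝ).indicator (fun _ => (⊤:ℝ≥0∞)) with hDdef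
  -- measurability
  have hA : Measurable A := by
    apply measurable_const.indicator
    exact measurableSet_le measurable_const (measurable_fst.sub measurable_snd).abs
  have hE3 : MeasurableSet {q : ℝ × ℝ | q.2 < a ∧ a ≤ q.1 ∧ q.1 < q.2 + m} := by
    refine MeasurableSet.inter (measurableSet_lt measurable_snd measurable_const) ?_
    exact MeasurableSet.inter (measurableSet_le measurable_const measurable_fst)
      (measurableSet_lt measurable_fst (measurable_snd.add_const m))
  have hE4 : MeasurableSet {q : ℝ × ℝ | q.1 < a ∧ a < q.2 ∧ q.2 < q.1 + m} := by
    refine MeasurableSet.inter (measurableSet_lt measurable_fst measurable_const) ?_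
    exact MeasurableSet.inter (measurableSet_lt measurable_const measurable_snd)
      (measurableSet_lt measurable_snd (measurable_fst.add_const m))
  have hB : Measurable B :=
    Measurable.indicator
      (((measurable_fst.sub measurable_snd).pow measurable_const).ennreal_ofReal) hE3
  have hC : Measurable C :=
    Measurable.indicator
      (((measurable_snd.sub measurable_fst).pow measurable_const).ennreal_ofReal) hE4
  have hDd : Measurable Dd := measurable_const.indicator (measurableSet_singleton a)
  -- the sum function
  set S : ℝ → ℝ → ℝ≥0∞ := fun t s =>
    ENNReal.ofReal (2*K^2) * (A (t, s) + B (t, s) + C (t, s) + Dd s) with hSdef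
  have hSt : ∀ s : ℝ, Measurable fun t => S t s := by
    intro s
    apply Measurable.const_mul
    have h1 : Measurable fun t : ℝ => (t, s) := measurable_id.prodMk measurable_const
    exact (((hA.comp h1).add (hB.comp h1)).add (hC.comp h1)).add measurable_const
  have hSswap : Measurable fun x : ℝ × ℝ => S x.2 x.1 := by
    apply Measurable.const_mul
    exact (((hA.comp measurable_swap).add (hB.comp measurable_swap)).add
      (hC.comp measurable_swap)).add (hDd.comp measurable_fst)
  have hSs : Measurable fun s => ∫⁻ t in Set.Ioo (0:ℝ) T, S t s :=
    Measurable.lintegral_prod_right' (f := fun x : ℝ × ℝ => S x.2 x.1) hSswap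
  -- main chain
  have step1 : ∫⁻ s in Set.Ioo (0 : ℝ) T, ∫⁻ t in Set.Ioo (0 : ℝ) T,
      ENNReal.ofReal
        (‖(Set.Ico (0 : ℝ) a).indicator f t - (Set.Ico (0 : ℝ) a).indicator f s‖ ^ 2 /
          |t - s| ^ (1 + 2 * α)) ≤
      ∫⁻ s in Set.Ioo (0 : ℝ) T, ∫⁻ t in Set.Ioo (0 : ℝ) T,
        (ENNReal.ofReal (2 * (‖f t - f s‖ ^ 2 / |t - s| ^ (1 + 2 * α))) + S t s) := by
    apply lintegral_mono_ae
    filter_upwards [ae_restrict_mem measurableSet_Ioo] with s hs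
    apply lintegral_mono_ae
    filter_upwards [ae_restrict_mem measurableSet_Ioo] with t ht
    exact pointwise_bound hα1 hα2 hK hmdef hfb ht hs
  have step2 : ∫⁻ s in Set.Ioo (0 : ℝ) T, ∫⁻ t in Set.Ioo (0 : ℝ) T,
      (ENNReal.ofReal (2 * (‖f t - f s‖ ^ 2 / |t - s| ^ (1 + 2 * α))) + S t s) =
      (∫⁻ s in Set.Ioo (0 : ℝ) T, ∫⁻ t in Set.Ioo (0 : ℝ) T,
        ENNReal.ofReal (2 * (‖f t - f s‖ ^ 2 / |t - s| ^ (1 + 2 * α))))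
      + ∫⁻ s in Set.Ioo (0 : ℝ) T, ∫⁻ t in Set.Ioo (0 : ℝ) T, S t s := by
    have h1 : ∀ s : ℝ, ∫⁻ t in Set.Ioo (0 : ℝ) T,
        (ENNReal.ofReal (2 * (‖f t - f s‖ ^ 2 / |t - s| ^ (1 + 2 * α))) + S t s) =
        (∫⁻ t in Set.Ioo (0 : ℝ) T,
          ENNReal.ofReal (2 * (‖f t - f s‖ ^ 2 / |t - s| ^ (1 + 2 * α))))
        + ∫⁻ t in Set.Ioo (0 : ℝ) T, S t s := fun s =>
      lintegral_add_right _ (hSt s)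
    simp_rw [h1]
    exact lintegral_add_right _ hSs
  -- first part
  have hF1 : (∫⁻ s in Set.Ioo (0 : ℝ) T, ∫⁻ t in Set.Ioo (0 : ℝ) T,
      ENNReal.ofReal (2 * (‖f t - f s‖ ^ 2 / |t - s| ^ (1 + 2 * α)))) ≤
      ENNReal.ofReal (2 * C₁) := by
    have h2 : ∀ x : ℝ, ENNReal.ofReal (2 * x) = 2 * ENNReal.ofReal x := by
      intro x
      rw [ENNReal.ofReal_mul (by norm_num : (0:ℝ) ≤ 2), ENNReal.ofReal_ofNat]
    simp_rw [h2, lintegral_const_mul' 2 _ (by norm_num : (2:ℝ≥0∞) ≠ ⊤)]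
    exact mul_le_mul_right hgag 2
  -- second part
  have hM : (∫⁻ s in Set.Ioo (0 : ℝ) T, ∫⁻ t in Set.Ioo (0 : ℝ) T, S t s) ≤
      ENNReal.ofReal (2*K^2) *
        ENNReal.ofReal (T * (T - m) + 2 * (m ^ (1 - 2*α) / (1 - 2*α))) := by
    have hsplit : ∀ s : ℝ, ∫⁻ t in Set.Ioo (0 : ℝ) T, S t s =
        ENNReal.ofReal (2*K^2) *
          ((∫⁻ t in Set.Ioo (0 : ℝ) T, A (t, s))
            + (∫⁻ t in Set.Ioo (0 : ℝ) T, B (t, s))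
            + (∫⁻ t in Set.Ioo (0 : ℝ) T, C (t, s))
            + (∫⁻ t in Set.Ioo (0 : ℝ) T, Dd s)) := by
      intro s
      have h1 : Measurable fun t : ℝ => (t, s) := measurable_id.prodMk measurable_const
      rw [hSdef]
      rw [lintegral_const_mul' _ _ ENNReal.ofReal_ne_top]
      congr 1
      have hBt : Measurable fun t : ℝ => B (t, s) := hB.comp h1
      have hCt : Measurable fun t : ℝ => C (t, s) := hC.comp h1
      rw [lintegral_add_right _ (measurable_const : Measurable fun _ : ℝ => Dd s),
        lintegral_add_right _ hCt, lintegral_add_right _ hBt]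
    simp_rw [hsplit]
    rw [lintegral_const_mul' _ _ ENNReal.ofReal_ne_top]
    have houter : ∫⁻ s in Set.Ioo (0 : ℝ) T,
        ((∫⁻ t in Set.Ioo (0 : ℝ) T, A (t, s))
          + (∫⁻ t in Set.Ioo (0 : ℝ) T, B (t, s))
          + (∫⁻ t in Set.Ioo (0 : ℝ) T, C (t, s))
          + (∫⁻ t in Set.Ioo (0 : ℝ) T, Dd s)) =
        (∫⁻ s in Set.Ioo (0 : ℝ) T, ∫⁻ t in Set.Ioo (0 : ℝ) T, A (t, s))
          + (∫⁻ s in Set.Ioo (0 : ℝ) T, ∫⁻ t in Set.Ioo (0 : ℝ) T, B (t, s))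
          + (∫⁻ s in Set.Ioo (0 : ℝ) T, ∫⁻ t in Set.Ioo (0 : ℝ) T, C (t, s))
          + (∫⁻ s in Set.Ioo (0 : ℝ) T, ∫⁻ t in Set.Ioo (0 : ℝ) T, Dd s) := by
      have hAs : Measurable fun s => ∫⁻ t in Set.Ioo (0:ℝ) T, A (t, s) :=
        Measurable.lintegral_prod_right' (hA.comp measurable_swap)
      have hBs : Measurable fun s => ∫⁻ t in Set.Ioo (0:ℝ) T, B (t, s) :=
        Measurable.lintegral_prod_right' (hB.comp measurable_swap)
      have hCs : Measurable fun s => ∫⁻ t in Set.Ioo (0:ℝ) T, C (t, s) :=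
        Measurable.lintegral_prod_right' (hC.comp measurable_swap)
      have hDs : Measurable fun s => ∫⁻ t in Set.Ioo (0:ℝ) T, Dd s := by
        have : (fun s => ∫⁻ _ in Set.Ioo (0:ℝ) T, Dd s) =
            fun s => Dd s * volume (Set.Ioo (0:ℝ) T) := by
          funext s
          exact setLIntegral_const _ _
        rw [this]
        exact hDd.mul_const _
      rw [lintegral_add_right _ hDs, lintegral_add_right _ hCs, lintegral_add_right _ hBs]
    rw [houter]
    refine mul_le_mul_right ?_ _
    have hbnd := add_le_add (add_le_add (add_le_add
      (far_bound T m hm0 hmT) (J1_bound hα1 hα2 T a m hm0))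
      (J2_bound hα1 hα2 T a m hm0)) (F5_bound T a)
    refine le_trans hbnd ?_
    have hmβ : (0:ℝ) ≤ m ^ (1-2*α) / (1-2*α) := div_nonneg (Real.rpow_nonneg hm0.le _) hβ.le
    have hTTm : (0:ℝ) ≤ T * (T - m) := mul_nonneg hT.le (by linarith)
    rw [add_zero]
    rw [← ENNReal.ofReal_add hTTm hmβ, ← ENNReal.ofReal_add (add_nonneg hTTm hmβ) hmβ]
    apply ENNReal.ofReal_le_ofReal
    linarith
  -- conclusion
  refine le_trans step1 (le_trans (le_of_eq step2) ?_)
  refine le_trans (add_le_add hF1 hM) ?_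
  have hmβ : (0:ℝ) ≤ m ^ (1-2*α) / (1-2*α) := div_nonneg (Real.rpow_nonneg hm0.le _) hβ.le
  have hTTm : (0:ℝ) ≤ T * (T - m) := mul_nonneg hT.le (by linarith)
  rw [← ENNReal.ofReal_mul (by positivity)]
  rw [← ENNReal.ofReal_add (by linarith)
    (mul_nonneg (by positivity) (by linarith : (0:ℝ) ≤ T * (T - m) + 2 * (m ^ (1-2*α)/(1-2*α))))]
  apply ENNReal.ofReal_le_ofReal
  have hrk := real_key hT hα1 hα2
  nlinarith [hrk, sq_nonneg K]
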